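/- There exists ᾱ > 0 (one may take ᾱ ≈ 0.068, the smaller root of 2cos(40°)α² − (2√2+2+4cos40°)α + 2cos40° − 1 = 0) such that for all α ∈ [0, ᾱ): if X ⊂ ℝ² satisfies |x−y| > 1−α for all distinct x,y ∈ X, then every point x ∈ X has at most 8 other points of X within distance √2 + α. -/

import Mathlib

open Real

private lemma cos_2pi9_gt : (151/200 : ℝ) < Real.cos (2 * π / 9) := by
  have h1 : 1 - (2 * π / 9) ^ 2 / 2 ≤ Real.cos (2 * π / 9) :=
    Real.one_sub_sq_div_two_le_cos
  have hπ : π < 3.15 := Real.pi_lt_d2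
  have hπ0 : 0 < π := Real.pi_pos
  nlinarith

private lemma nine_angles (φ : Fin 9 → ℝ) :
    ∃ i j : Fin 9, i ≠ j ∧ (151/200 : ℝ) ≤ Real.cos (φ i - φ j) := by
  by_contra hcon
  push_neg at hcon
  have hπ0 : 0 < π := Real.pi_pos
  set β := Real.arccos (151/200 : ℝ) with hβdef
  have hcosβ : Real.cos β = 151/200 := Real.cos_arccos (by norm_num) (by norm_num)
  have hβpos : 0 < β := Real.arccos_pos.2 (by norm_num)
  have hβπ : β ≤ π := Real.arccos_le_pi _
  have hβge : 2 * π / 9 ≤ β := by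
    by_contra hc
    push_neg at hc
    have h2 : Real.cos (2 * π / 9) ≤ Real.cos β :=
      Real.cos_le_cos_of_nonneg_of_le_pi (le_of_lt hβpos) (by linarith) (le_of_lt hc)
    have := cos_2pi9_gt
    linarith
  have h2π : (2 : ℝ) * π ≠ 0 := by positivity
  set ψ : Fin 9 → ℝ := fun i => 2 * π * Int.fract ((φ i - φ 0) / (2 * π)) with hψdef
  have hψ0 : ∀ i, 0 ≤ ψ i := fun i => by
    have := Int.fract_nonneg ((φ i - φ 0) / (2 * π))
    positivity
  have hψ2π : ∀ i, ψ i < 2 * π := fun i => by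
    have := Int.fract_lt_one ((φ i - φ 0) / (2 * π))
    calc ψ i < 2 * π * 1 := by
          apply mul_lt_mul_of_pos_left this (by positivity)
      _ = 2 * π := by ring
  have hψeq : ∀ i, ψ i = (φ i - φ 0) - 2 * π * ⌊(φ i - φ 0) / (2 * π)⌋ := by
    intro i
    show 2 * π * Int.fract ((φ i - φ 0) / (2 * π)) = _
    rw [← Int.self_sub_floor]
    field_simp
  have hcos_eq : ∀ i j, Real.cos (φ i - φ j) = Real.cos (ψ i - ψ j) := by
    intro i j
    have key : φ i - φ j = (ψ i - ψ j) +
        ((⌊(φ i - φ 0) / (2 * π)⌋ - ⌊(φ j - φ 0) / (2 * π)⌋ : ℤ) : ℝ) * (2 * π) := by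
      rw [hψeq i, hψeq j]
      push_cast
      ring
    rw [key, Real.cos_add_int_mul_two_pi]
  have hψzero : ψ 0 = 0 := by
    rw [hψdef]; simp
  have hfloor9 : ∀ i, ⌊ψ i / β⌋ < 9 := by
    intro i
    apply Int.floor_lt.2
    push_cast
    rw [div_lt_iff₀ hβpos]
    have := hψ2π i
    linarith
  have hfloor0 : ∀ i, 0 ≤ ⌊ψ i / β⌋ := by
    intro i
    exact Int.floor_nonneg.2 (div_nonneg (hψ0 i) hβpos.le)
  have hbdd : ∀ i, (⌊ψ i / β⌋).toNat < 9 := by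
    intro i
    have := hfloor9 i
    have := hfloor0 i
    omega
  set b : Fin 9 → Fin 9 := fun i => ⟨(⌊ψ i / β⌋).toNat, hbdd i⟩ with hbdef
  by_cases hinj : Function.Injective b
  · have hsurj : Function.Surjective b := Finite.surjective_of_injective hinj
    obtain ⟨j, hj⟩ := hsurj ⟨8, by norm_num⟩
    have hj8 : ⌊ψ j / β⌋ = 8 := by
      have h1 : (⌊ψ j / β⌋).toNat = 8 := congrArg Fin.val hj
      have := hfloor0 j
      omega
    have hjle : 8 * β ≤ ψ j := by
      have h1 : (8 : ℝ) ≤ ψ j / β := by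
        have := Int.floor_le (ψ j / β)
        rw [hj8] at this
        exact_mod_cast this
      rw [le_div_iff₀ hβpos] at h1
      linarith
    have hj0 : j ≠ 0 := by
      intro h
      rw [h, hψzero] at hj8
      simp at hj8
    have h1 : Real.cos (φ j - φ 0) = Real.cos (2 * π - ψ j) := by
      rw [hcos_eq j 0, hψzero, sub_zero, Real.cos_two_pi_sub]
    have h2 : Real.cos β ≤ Real.cos (2 * π - ψ j) := by
      apply Real.cos_le_cos_of_nonneg_of_le_pi (by linarith [hψ2π j]) hβπ
      linarith [hβge]
    have := hcon j 0 hj0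
    rw [h1] at this
    linarith [hcosβ ▸ h2]
  · obtain ⟨i, j, hij, hne⟩ := Function.not_injective_iff.1 hinj
    have hk : ⌊ψ i / β⌋ = ⌊ψ j / β⌋ := by
      have h1 : (⌊ψ i / β⌋).toNat = (⌊ψ j / β⌋).toNat := congrArg Fin.val hij
      have := hfloor0 i
      have := hfloor0 j
      omega
    have hi1 : (⌊ψ i / β⌋ : ℝ) ≤ ψ i / β := Int.floor_le _
    have hi2 : ψ i / β < ⌊ψ i / β⌋ + 1 := Int.lt_floor_add_one _
    have hj1 : (⌊ψ j / β⌋ : ℝ) ≤ ψ j / β := Int.floor_le _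
    have hj2 : ψ j / β < ⌊ψ j / β⌋ + 1 := Int.lt_floor_add_one _
    have habs : |ψ i - ψ j| ≤ β := by
      rw [abs_le]
      constructor
      · have h3 := (div_lt_iff₀ hβpos).1 hj2
        have h4 := (le_div_iff₀ hβpos).1 hi1
        rw [← hk] at h3
        linarith
      · have h3 := (div_lt_iff₀ hβpos).1 hi2
        have h4 := (le_div_iff₀ hβpos).1 hj1
        rw [← hk] at h4
        linarith
    have h2 : Real.cos β ≤ Real.cos |ψ i - ψ j| :=
      Real.cos_le_cos_of_nonneg_of_le_pi (abs_nonneg _) hβπ habs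
    rw [Real.cos_abs] at h2
    have := hcon i j hne
    rw [hcos_eq i j] at this
    linarith [hcosβ ▸ h2]


private lemma law_of_cos (z w : ℂ) :
    (‖z - w‖) ^ 2 = (‖z‖) ^ 2 + (‖w‖) ^ 2
      - 2 * ‖z‖ * ‖w‖ * Real.cos (z.arg - w.arg) := by
  have h1 : ‖z‖ * ‖w‖ * Real.cos (z.arg - w.arg)
      = z.re * w.re + z.im * w.im := by
    rw [Real.cos_sub]
    have hz1 := Complex.norm_mul_cos_arg z
    have hz2 := Complex.norm_mul_sin_arg z
    have hw1 := Complex.norm_mul_cos_arg w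
    have hw2 := Complex.norm_mul_sin_arg w
    linear_combination (‖w‖ * Real.cos w.arg) * hz1 + z.re * hw1
      + (‖w‖ * Real.sin w.arg) * hz2 + z.im * hw2
  simp only [Complex.sq_norm, Complex.normSq_apply, Complex.sub_re, Complex.sub_im]
  linear_combination (2 : ℝ) * h1

set_option maxHeartbeats 1000000 in
private lemma box_ineq {α a b : ℝ} (hα0 : 0 ≤ α) (hα : α < 1/200)
    (ha1 : 1 - α < a) (ha2 : a ≤ Real.sqrt 2 + α)
    (hb1 : 1 - α < b) (hb2 : b ≤ Real.sqrt 2 + α) :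
    a ^ 2 + b ^ 2 - (1 - α) ^ 2 ≤ (151/100) * a * b := by
  have hs2 : (Real.sqrt 2) ^ 2 = 2 := Real.sq_sqrt (by norm_num)
  have hs0 : 0 ≤ Real.sqrt 2 := Real.sqrt_nonneg 2
  have hs : Real.sqrt 2 < 1.41422 := by nlinarith
  set R := Real.sqrt 2 + α with hR
  have hcR : 1 - α ≤ R := by nlinarith
  nlinarith [mul_nonneg (by linarith : (0:ℝ) ≤ R - a) (by linarith : (0:ℝ) ≤ R - b),
    mul_nonneg (by linarith : (0:ℝ) ≤ a - (1-α)) (by linarith : (0:ℝ) ≤ b - (1-α)),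
    mul_nonneg (by linarith : (0:ℝ) ≤ a - (1-α)) (by linarith : (0:ℝ) ≤ R - b),
    mul_nonneg (by linarith : (0:ℝ) ≤ R - a) (by linarith : (0:ℝ) ≤ b - (1-α)),
    mul_nonneg (by linarith : (0:ℝ) ≤ a - (1-α)) (by linarith : (0:ℝ) ≤ R - a),
    mul_nonneg (by linarith : (0:ℝ) ≤ b - (1-α)) (by linarith : (0:ℝ) ≤ R - b)]

private lemma cos_lt_of_neighbors {α : ℝ} (hα0 : 0 ≤ α) (hα : α < 1/200) {z w : ℂ}
    (hz1 : 1 - α < ‖z‖) (hz2 : ‖z‖ ≤ Real.sqrt 2 + α)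
    (hw1 : 1 - α < ‖w‖) (hw2 : ‖w‖ ≤ Real.sqrt 2 + α)
    (hd : 1 - α < ‖z - w‖) :
    Real.cos (z.arg - w.arg) < 151/200 := by
  have h1 := law_of_cos z w
  have h2 := box_ineq hα0 hα hz1 hz2 hw1 hw2
  have hza : 0 < ‖z‖ := by linarith
  have hwa : 0 < ‖w‖ := by linarith
  have hd2 : (1 - α) ^ 2 < (‖z - w‖) ^ 2 := by nlinarith
  nlinarith [mul_pos hza hwa]

theorem at_most_eight_neighbors_perturbed :
    ∃ abar : ℝ, 0 < abar ∧ ∀ α : ℝ, 0 ≤ α → α < abar →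
      ∀ X : Set (EuclideanSpace ℝ (Fin 2)),
        (∀ x ∈ X, ∀ y ∈ X, x ≠ y → 1 - α < dist x y) →
        ∀ x ∈ X,
          {y ∈ X | y ≠ x ∧ dist x y ≤ Real.sqrt 2 + α}.Finite ∧
            {y ∈ X | y ≠ x ∧ dist x y ≤ Real.sqrt 2 + α}.ncard ≤ 8 := by
  refine ⟨1/200, by norm_num, ?_⟩
  intro α hα0 hα X hX x hx
  set N := {y ∈ X | y ≠ x ∧ dist x y ≤ Real.sqrt 2 + α} with hNdef
  have key : ∀ f : Fin 9 → EuclideanSpace ℝ (Fin 2), Function.Injective f →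
      (∀ i, f i ∈ N) → False := by
    intro f hfinj hfN
    set e := Complex.orthonormalBasisOneI.repr with hedef
    set g : Fin 9 → ℂ := fun i => e.symm (f i - x) with hgdef
    have hmem : ∀ i, f i ∈ X ∧ f i ≠ x ∧ dist x (f i) ≤ Real.sqrt 2 + α := fun i => hfN i
    have habs : ∀ i, ‖g i‖ = dist x (f i) := by
      intro i
      rw [hgdef]
      simp only []
      rw [LinearIsometryEquiv.norm_map, dist_comm, dist_eq_norm]
    have hlow : ∀ i, 1 - α < ‖g i‖ := by
      intro i
      rw [habs i]
      exact hX x hx (f i) (hmem i).1 (Ne.symm (hmem i).2.1)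
    have hhigh : ∀ i, ‖g i‖ ≤ Real.sqrt 2 + α := by
      intro i
      rw [habs i]
      exact (hmem i).2.2
    have hpair : ∀ i j : Fin 9, i ≠ j → 1 - α < ‖g i - g j‖ := by
      intro i j hij
      have h1 : g i - g j = e.symm (f i - f j) := by
        rw [hgdef]; simp only []
        rw [← map_sub]
        congr 1
        abel
      rw [h1, LinearIsometryEquiv.norm_map, ← dist_eq_norm]
      exact hX (f i) (hmem i).1 (f j) (hmem j).1 (fun h => hij (hfinj h))
    obtain ⟨i, j, hij, hcos⟩ := nine_angles (fun i => (g i).arg)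
    have := cos_lt_of_neighbors hα0 hα (hlow i) (hhigh i) (hlow j) (hhigh j)
      (hpair i j hij)
    exact lt_irrefl _ (lt_of_le_of_lt hcos this)
  have key9 : ∀ t : Set (EuclideanSpace ℝ (Fin 2)), t ⊆ N → t.Finite →
      t.ncard = 9 → False := by
    intro t hts htf htc
    haveI := htf.fintype
    have hc : Fintype.card t = 9 := by
      rw [← Set.toFinset_card, ← Set.ncard_eq_toFinset_card' t, htc]
    let F : Fin 9 → EuclideanSpace ℝ (Fin 2) :=
      fun i => ((Fintype.equivFinOfCardEq hc).symm i : EuclideanSpace ℝ (Fin 2))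
    refine key F ?_ ?_
    · exact Subtype.coe_injective.comp (Equiv.injective _)
    · intro i
      exact hts (Subtype.mem _)
  have hfin : N.Finite := by
    by_contra hinf
    obtain ⟨t, hts, htf, htc⟩ := Set.Infinite.exists_subset_ncard_eq hinf 9
    exact key9 t hts htf htc
  refine ⟨hfin, ?_⟩
  by_contra hc
  push_neg at hc
  obtain ⟨t, hts, htc⟩ := Set.exists_subset_card_eq (show 9 ≤ N.ncard from hc)
  exact key9 t hts (hfin.subset hts) htc
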